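/- arXiv:2111.10205 — 3 statements merged into one kernel-verified Lean document; each statement's English description precedes it below -/
import Mathlib

section
/- Let F : ℝⁿ → ℝⁿ, let x : ℝ → ℝⁿ be differentiable with x'(t) = F(x(t)) for all t, let h : ℝⁿ → ℝ be differentiable, and let λ > 0. If for every t ≥ t₀ the derivative of h at x(t) applied to F(x(t)) is at least -λ·h(x(t)), and h(x(t₀)) ≥ 0, then h(x(t)) ≥ 0 for all t ≥ t₀. -/
/-- Forward invariance of the zero superlevel set `{x | h x ≥ 0}` along a solution
of `ẋ = F x` under the CBF condition `L_F h (x t) ≥ -λ * h (x t)`. -/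
theorem cbf_forward_invariance_along_trajectory
    (n : ℕ) (F : (Fin n → ℝ) → (Fin n → ℝ)) (x : ℝ → (Fin n → ℝ))
    (hx : Differentiable ℝ x)
    (hode : ∀ t : ℝ, deriv x t = F (x t))
    (h : (Fin n → ℝ) → ℝ) (hh : Differentiable ℝ h)
    (lam : ℝ) (hlam : 0 < lam) (t₀ : ℝ)
    (hcbf : ∀ t, t₀ ≤ t → fderiv ℝ h (x t) (F (x t)) ≥ -lam * h (x t))
    (h0 : 0 ≤ h (x t₀)) :
    ∀ t, t₀ ≤ t → 0 ≤ h (x t) := by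
  intro t ht
  set g : ℝ → ℝ := fun s => h (x s) * Real.exp (lam * s) with hg
  have hder : ∀ s : ℝ, HasDerivAt g
      ((fderiv ℝ h (x s) (F (x s)) + lam * h (x s)) * Real.exp (lam * s)) s := by
    intro s
    have hx' : HasDerivAt x (F (x s)) s := hode s ▸ (hx s).hasDerivAt
    have h1 : HasDerivAt (fun s => h (x s)) (fderiv ℝ h (x s) (F (x s))) s :=
      (hh (x s)).hasFDerivAt.comp_hasDerivAt s hx'
    have h2 : HasDerivAt (fun s : ℝ => Real.exp (lam * s)) (lam * Real.exp (lam * s)) s := by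
      simpa [mul_comm, Function.comp_def] using (Real.hasDerivAt_exp (lam * s)).comp s
        ((hasDerivAt_id s).const_mul lam)
    have := h1.mul h2
    exact this.congr_deriv (by ring)
  have hmono : MonotoneOn g (Set.Ici t₀) := by
    apply monotoneOn_of_deriv_nonneg (convex_Ici t₀)
    · exact (Continuous.mul ((hh.comp hx).continuous)
        (Real.continuous_exp.comp (continuous_const.mul continuous_id))).continuousOn
    · intro s _
      exact (hder s).differentiableAt.differentiableWithinAt
    · intro s hs
      rw [interior_Ici] at hs
      rw [(hder s).deriv]
      have hc := hcbf s (le_of_lt hs)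
      have he := Real.exp_pos (lam * s)
      nlinarith
  have hkey : g t₀ ≤ g t := hmono (Set.self_mem_Ici) (Set.mem_Ici.mpr ht) ht
  have hgt₀ : 0 ≤ g t₀ := mul_nonneg h0 (Real.exp_pos _).le
  have : 0 ≤ h (x t) * Real.exp (lam * t) := le_trans hgt₀ hkey
  nlinarith [Real.exp_pos (lam * t)]
end

section
/- Let m > 0, v̄ > 0, let λ₁ ≥ λ₂ > 0, let F_r : ℝ → ℝ satisfy F_r(v) ≥ 0 for all v ∈ [0, v̄], and let u̲ < 0 < ū with ū ≥ F_r(v)/m - λ₁·v for all v ∈ [0, v̄]. Then for every v ∈ [0, v̄] there exists u with u̲ ≤ u ≤ ū such that simultaneously u ≥ F_r(v)/m - λ₁·v and u ≤ F_r(v)/m + λ₂·(v̄ - v). In particular, F_r(v)/m - λ₁·v ≤ F_r(v)/m + λ₂·(v̄ - v) for all v ∈ [0, v̄]. -/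
/-- Control-sharing property of the lower and upper velocity-bound CBFs:
when `λ₁ ≥ λ₂ > 0`, for every `v ∈ [0, v̄]` there is a single admissible control
`u ∈ [u̲, ū]` satisfying both CBF constraints simultaneously; in particular the
two constraint thresholds are compatible. -/
theorem velocity_cbfs_control_sharing
    (m vbar lam₁ lam₂ ulo uhi : ℝ) (Fr : ℝ → ℝ)
    (hm : 0 < m) (hvbar : 0 < vbar)
    (hlam₂ : 0 < lam₂) (hlam : lam₂ ≤ lam₁)
    (hFrpos : ∀ v ∈ Set.Icc (0 : ℝ) vbar, 0 ≤ Fr v)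
    (hulo : ulo < 0) (huhi : 0 < uhi)
    (hufeas : ∀ v ∈ Set.Icc (0 : ℝ) vbar, Fr v / m - lam₁ * v ≤ uhi) :
    (∀ v ∈ Set.Icc (0 : ℝ) vbar,
      ∃ u : ℝ, ulo ≤ u ∧ u ≤ uhi ∧
        Fr v / m - lam₁ * v ≤ u ∧ u ≤ Fr v / m + lam₂ * (vbar - v)) ∧
    (∀ v ∈ Set.Icc (0 : ℝ) vbar,
      Fr v / m - lam₁ * v ≤ Fr v / m + lam₂ * (vbar - v)) := by
  have key : ∀ v ∈ Set.Icc (0 : ℝ) vbar,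
      Fr v / m - lam₁ * v ≤ Fr v / m + lam₂ * (vbar - v) := by
    intro v hv
    obtain ⟨hv0, hv1⟩ := hv
    have h1 : 0 ≤ lam₁ * v := mul_nonneg (le_trans hlam₂.le hlam) hv0
    have h2 : 0 ≤ lam₂ * (vbar - v) := mul_nonneg hlam₂.le (by linarith)
    linarith
  refine ⟨?_, key⟩
  intro v hv
  obtain ⟨hv0, hv1⟩ := hv
  refine ⟨max (Fr v / m - lam₁ * v) 0, ?_, ?_, le_max_left _ _, ?_⟩
  · exact le_trans hulo.le (le_max_right _ _)
  · exact max_le (hufeas v ⟨hv0, hv1⟩) huhi.le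
  · have h2 : 0 ≤ lam₂ * (vbar - v) := mul_nonneg hlam₂.le (by linarith)
    have hF : 0 ≤ Fr v / m := div_nonneg (hFrpos v ⟨hv0, hv1⟩) hm.le
    exact max_le (key v ⟨hv0, hv1⟩) (by linarith)
end

section
/- Let c ∈ ℝ, b₂ > 0, and b₁ ≤ c. Then for every x ∈ ℝ, c + (1/b₂)·ln(1 + exp((x - b₁)·b₂)) - max{c, x} ≤ (c - b₁) + (ln 2)/b₂. -/
lemma log_one_add_exp_le (t : ℝ) : Real.log (1 + Real.exp t) ≤ max 0 t + Real.log 2 := by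
  have h1 : (1 : ℝ) + Real.exp t ≤ 2 * Real.exp (max 0 t) := by
    have ha : (1 : ℝ) ≤ Real.exp (max 0 t) := by
      calc (1:ℝ) = Real.exp 0 := Real.exp_zero.symm
        _ ≤ Real.exp (max 0 t) := Real.exp_le_exp.2 (le_max_left 0 t)
    have hb : Real.exp t ≤ Real.exp (max 0 t) := Real.exp_le_exp.2 (le_max_right 0 t)
    nlinarith
  have h2 : Real.log (1 + Real.exp t) ≤ Real.log (2 * Real.exp (max 0 t)) :=
    Real.log_le_log (by positivity) h1
  rw [Real.log_mul (by norm_num) (Real.exp_ne_zero _), Real.log_exp] at h2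
  linarith

/-- Conservatism bound of the smooth maximum approximation: for `b₁ ≤ c`, `b₂ > 0`,
the gap between `c + (1/b₂)·ln(1 + e^((x - b₁)·b₂))` and `max c x` is at most
`(c - b₁) + (ln 2)/b₂` for every `x`. -/
theorem smooth_max_approximation_gap_bound
    (c b₁ b₂ : ℝ) (hb₂ : 0 < b₂) (hb₁ : b₁ ≤ c) :
    ∀ x : ℝ, c + (1 / b₂) * Real.log (1 + Real.exp ((x - b₁) * b₂)) - max c x ≤
      (c - b₁) + Real.log 2 / b₂ := by
  intro x
  have hlog := log_one_add_exp_le ((x - b₁) * b₂)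
  have hmul : (1 / b₂) * Real.log (1 + Real.exp ((x - b₁) * b₂)) ≤
      (1 / b₂) * (max 0 ((x - b₁) * b₂) + Real.log 2) := by
    apply mul_le_mul_of_nonneg_left hlog (by positivity)
  rcases le_total x c with h | h
  · rw [max_eq_left h]
    have hmax : max 0 ((x - b₁) * b₂) ≤ (c - b₁) * b₂ := by
      apply max_le (by nlinarith) (by nlinarith)
    have h5 : (1 / b₂) * (max 0 ((x - b₁) * b₂) + Real.log 2) ≤
        (1 / b₂) * ((c - b₁) * b₂ + Real.log 2) := by
      apply mul_le_mul_of_nonneg_left (by linarith) (by positivity)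
    have hb₂' : b₂ ≠ 0 := ne_of_gt hb₂
    have h6 : (1 / b₂) * ((c - b₁) * b₂ + Real.log 2) = (c - b₁) + Real.log 2 / b₂ := by
      field_simp
    linarith
  · rw [max_eq_right h]
    have hx : b₁ ≤ x := le_trans hb₁ h
    have hmax : max 0 ((x - b₁) * b₂) = (x - b₁) * b₂ :=
      max_eq_right (by nlinarith)
    rw [hmax] at hmul
    have hb₂' : b₂ ≠ 0 := ne_of_gt hb₂
    have : (1 / b₂) * ((x - b₁) * b₂ + Real.log 2) = (x - b₁) + Real.log 2 / b₂ := by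
      field_simp
    rw [this] at hmul
    linarith
end
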